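/- Let G be a countable group, φ an irreducible action of G on the line, and H a commensurated subgroup of G such that the restriction of φ to H admits no minimal set, i.e. there is no nonempty closed subset Λ of ℝ invariant under φ(H) on which every φ(H)-orbit is dense. Then for every g ∈ G and every irreducible wandering interval I for φ(H), the image φ(g)(I) is again an irreducible wandering interval for φ(H). -/

import Mathlib

open Topology Filter

/-!  `ℝ ≃o ℝ` is the group `Homeo₀(ℝ)` of orientation-preserving homeomorphisms of the
line (order isomorphisms of `ℝ`).  An action of a group `G` on the line is a group
homomorphism `G →* (ℝ ≃o ℝ)`. -/

/-- The underlying map of an action, as a point of the function space `G → ℝ → ℝ`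
(equipped with the product topology of pointwise convergence and its Borel σ-algebra). -/
def actMap {G : Type*} [Group G] (φ : G →* (ℝ ≃o ℝ)) : G → ℝ → ℝ := fun g => ⇑(φ g)

/-- An action is minimal if every orbit is dense. -/
def IsMinimalAction {G : Type*} [Group G] (φ : G →* (ℝ ≃o ℝ)) : Prop :=
  ∀ x : ℝ, Dense {y : ℝ | ∃ g : G, φ g x = y}

/-- Conjugation of (the underlying map of) an action by `f ∈ Homeo₀(ℝ)`. -/
def conjFun {G : Type*} (f : ℝ ≃o ℝ) (F : G → ℝ → ℝ) : G → ℝ → ℝ :=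
  fun g x => f (F g (f.symm x))

/-- The space of minimal actions of `G` on the line, as a subset of the function
space `G → ℝ → ℝ`. -/
def RepMin (G : Type*) [Group G] : Set (G → ℝ → ℝ) :=
  {F | ∃ φ : G →* (ℝ ≃o ℝ), IsMinimalAction φ ∧ F = actMap φ}

/-- `G` belongs to the class `𝒞`: the conjugacy relation on `RepMin G` is smooth, i.e.
there is a Borel map to `ℝ` whose fibers are exactly the conjugacy classes. -/
def ClassC (G : Type*) [Group G] : Prop :=
  ∃ r : (RepMin G) → ℝ, Measurable r ∧
    ∀ φ ψ : RepMin G, (r φ = r ψ ↔ ∃ f : ℝ ≃o ℝ, conjFun f (φ : G → ℝ → ℝ) = (ψ : G → ℝ → ℝ))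

/-- `H` is a commensurated subgroup of `G`: for every `g`, `H ∩ gHg⁻¹` has finite index
in both `H` and `gHg⁻¹`. -/
def Commensurated {G : Type*} [Group G] (H : Subgroup G) : Prop :=
  ∀ g : G, Subgroup.Commensurable H (Subgroup.map (MulAut.conj g).toMonoidHom H)

/-- The restriction of `φ` to `H` admits a minimal set: a nonempty closed
`φ(H)`-invariant set on which all `φ(H)`-orbits are dense. -/
def HasMinimalSetOn {G : Type*} [Group G] (φ : G →* (ℝ ≃o ℝ)) (H : Subgroup G) : Prop :=
  ∃ Λ : Set ℝ, Λ.Nonempty ∧ IsClosed Λ ∧ (∀ h ∈ H, (φ h) '' Λ = Λ) ∧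
    ∀ x ∈ Λ, Λ ⊆ closure {y : ℝ | ∃ h ∈ H, φ h x = y}

/-- `I` is a wandering interval for `φ(H)`: a nonempty open bounded interval moved off
itself or to itself by each element of `φ(H)`. -/
def IsWanderingInterval {G : Type*} [Group G] (φ : G →* (ℝ ≃o ℝ)) (H : Subgroup G)
    (I : Set ℝ) : Prop :=
  (∃ a b : ℝ, a < b ∧ I = Set.Ioo a b) ∧
    ∀ h ∈ H, (φ h) '' I = I ∨ ((φ h) '' I) ∩ I = ∅

/-- An irreducible wandering interval: the stabilizer of `I` in `φ(H)` acts on `I`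
without a global fixed point. -/
def IsIrredWanderingInterval {G : Type*} [Group G] (φ : G →* (ℝ ≃o ℝ)) (H : Subgroup G)
    (I : Set ℝ) : Prop :=
  IsWanderingInterval φ H I ∧
    ∀ x ∈ I, ∃ h ∈ H, (φ h) '' I = I ∧ φ h x ≠ x

section Aux
variable {G : Type*} [Group G] (φ : G →* (ℝ ≃o ℝ))

lemma phi_mul_apply (a b : G) (x : ℝ) : φ (a * b) x = φ a (φ b x) := by
  rw [map_mul]; rfl

lemma phi_one_apply (x : ℝ) : φ 1 x = x := by rw [map_one]; rfl

lemma phi_image_mul (a b : G) (S : Set ℝ) : φ (a * b) '' S = φ a '' (φ b '' S) := by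
  rw [Set.image_image]
  exact Set.image_congr fun x _ => phi_mul_apply φ a b x

lemma phi_one_image (S : Set ℝ) : φ 1 '' S = S := by
  have : ∀ x ∈ S, φ 1 x = x := fun x _ => phi_one_apply φ x
  rw [Set.image_congr this]; simp

lemma phi_inv_image {a : G} {S : Set ℝ} (h : φ a '' S = S) : φ a⁻¹ '' S = S := by
  conv_lhs => rw [← h]
  rw [← phi_image_mul, inv_mul_cancel, phi_one_image]

lemma Ioo_endpoints {a b c d : ℝ} (hab : a < b) (h : Set.Ioo a b = Set.Ioo c d) :
    a = c ∧ b = d := by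
  have hne : (Set.Ioo c d).Nonempty := h ▸ Set.nonempty_Ioo.2 hab
  have hcd : c < d := Set.nonempty_Ioo.1 hne
  constructor
  · rw [← csInf_Ioo hab, ← csInf_Ioo hcd, h]
  · rw [← csSup_Ioo hab, ← csSup_Ioo hcd, h]



/-- The stabilizer of a set `J` inside a subgroup `M`, for the action `φ`. -/
def stabIn (M : Subgroup G) (J : Set ℝ) : Subgroup G where
  carrier := {m : G | m ∈ M ∧ φ m '' J = J}
  one_mem' := ⟨M.one_mem, phi_one_image φ J⟩
  mul_mem' := fun ha hb => ⟨M.mul_mem ha.1 hb.1, by rw [phi_image_mul, hb.2, ha.2]⟩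
  inv_mem' := fun ha => ⟨M.inv_mem ha.1, phi_inv_image φ ha.2⟩

lemma mem_stabIn {M : Subgroup G} {J : Set ℝ} {m : G} :
    m ∈ stabIn φ M J ↔ m ∈ M ∧ φ m '' J = J := Iff.rfl

lemma descent {L M : Subgroup G} (hle : L ≤ M) (hrel : L.relIndex M ≠ 0)
    {J : Set ℝ} (hJ : IsIrredWanderingInterval φ M J) :
    IsIrredWanderingInterval φ L J := by
  obtain ⟨⟨hshape, hwand⟩, hirr⟩ := hJ
  refine ⟨⟨hshape, fun k hk => hwand k (hle hk)⟩, ?_⟩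
  intro x hx
  by_contra hcon
  push_neg at hcon
  set T := stabIn φ M J with hT
  have hTM : T ≤ M := fun t ht => ht.1
  have hfinrel : (L ⊓ T).relIndex T ≠ 0 := by
    rw [Subgroup.inf_relIndex_right]
    intro h0
    exact hrel (Subgroup.relIndex_eq_zero_of_le_right hTM h0)
  have hfin : Finite (T ⧸ (L ⊓ T).subgroupOf T) := by
    rw [Subgroup.relIndex, Subgroup.index] at hfinrel
    exact (Nat.card_ne_zero.mp hfinrel).2
  -- the orbit of x under T is finite
  set f : T → ℝ := fun t => φ (t : G) x with hf
  have hconst : ∀ t₁ t₂ : T, (QuotientGroup.leftRel ((L ⊓ T).subgroupOf T)) t₁ t₂ →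
      f t₁ = f t₂ := by
    intro t₁ t₂ hrel12
    rw [QuotientGroup.leftRel_apply, Subgroup.mem_subgroupOf] at hrel12
    have h1 : ((t₁⁻¹ * t₂ : T) : G) ∈ L := hrel12.1
    have h2 : φ ((t₁⁻¹ * t₂ : T) : G) '' J = J := hrel12.2.2
    have hfix : φ ((t₁⁻¹ * t₂ : T) : G) x = x := hcon _ h1 h2
    have : f t₂ = φ (t₁ : G) (φ ((t₁⁻¹ * t₂ : T) : G) x) := by
      rw [← phi_mul_apply]
      push_cast
      group
      rfl
    rw [this, hfix]
  set F : T ⧸ (L ⊓ T).subgroupOf T → ℝ := Quotient.lift f hconst with hF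
  have hrange : Set.range f ⊆ Set.range F := by
    rintro y ⟨t, rfl⟩
    exact ⟨QuotientGroup.mk t, rfl⟩
  have hOfin : (Set.range f).Finite := (Set.finite_range F).subset hrange
  have hOne : (Set.range f).Nonempty := ⟨x, ⟨1, phi_one_apply φ x⟩⟩
  obtain ⟨y, hyO, hymax⟩ := Set.Finite.exists_maximalFor id _ hOfin hOne
  have hgreat : ∀ z ∈ Set.range f, z ≤ y := by
    intro z hz
    by_contra hzy
    push_neg at hzy
    exact absurd (hymax hz hzy.le) (not_le.mpr hzy)
  have hyJ : y ∈ J := by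
    obtain ⟨t, rfl⟩ := hyO
    have := t.2.2
    rw [← this]
    exact ⟨x, hx, rfl⟩
  have hyfix : ∀ t : G, t ∈ T → φ t y = y := by
    intro t ht
    obtain ⟨t₀, rfl⟩ := hyO
    have hmemO : ∀ s : G, s ∈ T → φ s (f t₀) ∈ Set.range f := by
      intro s hs
      refine ⟨⟨s, hs⟩ * t₀, ?_⟩
      simp only [hf]
      rw [Subgroup.coe_mul, phi_mul_apply]
    have h1 : φ t (f t₀) ≤ f t₀ := hgreat _ (hmemO t ht)
    have h2 : φ t⁻¹ (f t₀) ≤ f t₀ := hgreat _ (hmemO t⁻¹ (T.inv_mem ht))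
    have h3 : f t₀ ≤ φ t (f t₀) := by
      have := (φ t).monotone h2
      rwa [← phi_mul_apply, mul_inv_cancel, phi_one_apply] at this
    exact le_antisymm h1 h3
  obtain ⟨m, hmM, hmJ, hmy⟩ := hirr y hyJ
  exact hmy (hyfix m ⟨hmM, hmJ⟩)

lemma transport {H : Subgroup G} (g : G) {I : Set ℝ}
    (hI : IsIrredWanderingInterval φ H I) :
    IsIrredWanderingInterval φ (Subgroup.map (MulAut.conj g).toMonoidHom H) (φ g '' I) := by
  obtain ⟨⟨⟨a, b, hab, rfl⟩, hwand⟩, hirr⟩ := hI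
  have hinj : Function.Injective ⇑(φ g) := (φ g).injective
  have himg : ∀ h : G, h ∈ H →
      φ (g * h * g⁻¹) '' (φ g '' Set.Ioo a b) = φ g '' (φ h '' Set.Ioo a b) := by
    intro h hh
    rw [← phi_image_mul, ← phi_image_mul]
    group
  constructor
  · constructor
    · exact ⟨φ g a, φ g b, (φ g).strictMono hab, OrderIso.image_Ioo (φ g) a b⟩
    · intro h' hh'
      obtain ⟨h, hh, rfl⟩ := Subgroup.mem_map.mp hh'
      rw [show (MulAut.conj g).toMonoidHom h = g * h * g⁻¹ from rfl]
      rcases hwand h hh with heq | hdis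
      · left; rw [himg h hh, heq]
      · right
        rw [himg h hh, ← Set.image_inter hinj, hdis, Set.image_empty]
  · rintro x ⟨x₀, hx₀, rfl⟩
    obtain ⟨h, hh, hhI, hhx⟩ := hirr x₀ hx₀
    refine ⟨g * h * g⁻¹, ?_, ?_, ?_⟩
    · exact Subgroup.mem_map.mpr ⟨h, hh, rfl⟩
    · rw [himg h hh, hhI]
    · have : φ (g * h * g⁻¹) (φ g x₀) = φ g (φ h x₀) := by
        rw [← phi_mul_apply, ← phi_mul_apply]
        congr 1
        group
      rw [this]
      exact fun hc => hhx (hinj hc)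

lemma shrink {K : Subgroup G} {J : Set ℝ}
    (hw : ∀ k ∈ K, φ k '' J = J ∨ (φ k '' J) ∩ J = ∅)
    {h : G} (hpow : ∃ m : ℕ, 0 < m ∧ h ^ m ∈ K)
    (hsub : φ h '' J ⊆ J) (hne : φ h '' J ≠ J) (hJne : J.Nonempty) : False := by
  obtain ⟨m, hm, hmK⟩ := hpow
  have key : ∀ n : ℕ, φ (h ^ n) '' J ⊆ J := by
    intro n
    induction n with
    | zero => rw [pow_zero, phi_one_image]
    | succ n ih =>
      rw [pow_succ, phi_image_mul]
      exact (Set.image_mono hsub).trans ih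
  have key2 : φ (h ^ m) '' J ⊆ φ h '' J := by
    obtain ⟨n, rfl⟩ : ∃ n, m = n + 1 := ⟨m - 1, by omega⟩
    rw [pow_succ', phi_image_mul]
    exact Set.image_mono (key n)
  rcases hw _ hmK with heq | hdis
  · have h4 := key2
    rw [heq] at h4
    exact hne (le_antisymm hsub h4)
  · obtain ⟨x, hx⟩ := hJne
    have : φ (h ^ m) x ∈ (φ (h ^ m) '' J) ∩ J := ⟨⟨x, hx, rfl⟩, key m ⟨x, hx, rfl⟩⟩
    rw [hdis] at this
    exact this

lemma crossing₁ {L : Subgroup G} {a b a' b' : ℝ} (h1 : a < a') (h2 : a' < b) (h3 : b < b')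
    (hJ : IsIrredWanderingInterval φ L (Set.Ioo a b))
    (hJ' : ∀ k ∈ L, φ k '' Set.Ioo a' b' = Set.Ioo a' b' ∨
      (φ k '' Set.Ioo a' b') ∩ Set.Ioo a' b' = ∅) : False := by
  have hab : a < b := h1.trans h2
  have ha'b' : a' < b' := h2.trans h3
  obtain ⟨k, hkL, hkJ, hka'⟩ := hJ.2 a' ⟨h1, h2⟩
  have himg : Set.Ioo (φ k a) (φ k b) = Set.Ioo a b := by
    rw [← OrderIso.image_Ioo]; exact hkJ
  obtain ⟨hka, hkb⟩ := Ioo_endpoints ((φ k).strictMono hab) himg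
  have hka'J : φ k a' ∈ Set.Ioo a b := by
    rw [← hkJ]; exact ⟨a', ⟨h1, h2⟩, rfl⟩
  rcases hJ' k hkL with heq | hdis
  · rw [OrderIso.image_Ioo] at heq
    exact hka' (Ioo_endpoints ((φ k).strictMono ha'b') heq).1
  · rw [OrderIso.image_Ioo, Set.Ioo_inter_Ioo] at hdis
    have hne : max (φ k a') a' < min (φ k b') b' := by
      have e1 : φ k a' < φ k b' := (φ k).strictMono ha'b'
      have e2 : φ k a' < b' := hka'J.2.trans h3
      have e3 : a' < φ k b' := by
        have : φ k b < φ k b' := (φ k).strictMono h3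
        rw [hkb] at this
        exact h2.trans this
      simp only [max_lt_iff, lt_min_iff]
      exact ⟨⟨e1, e3⟩, ⟨e2, ha'b'⟩⟩
    have := Set.nonempty_Ioo.2 hne
    rw [hdis] at this
    exact Set.not_nonempty_empty this

lemma crossing₂ {L : Subgroup G} {a b a' b' : ℝ} (h1 : a' < a) (h2 : a < b') (h3 : b' < b)
    (hJ : IsIrredWanderingInterval φ L (Set.Ioo a b))
    (hJ' : ∀ k ∈ L, φ k '' Set.Ioo a' b' = Set.Ioo a' b' ∨
      (φ k '' Set.Ioo a' b') ∩ Set.Ioo a' b' = ∅) : False := by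
  have hab : a < b := h2.trans h3
  have ha'b' : a' < b' := h1.trans h2
  obtain ⟨k, hkL, hkJ, hkb'⟩ := hJ.2 b' ⟨h2, h3⟩
  have himg : Set.Ioo (φ k a) (φ k b) = Set.Ioo a b := by
    rw [← OrderIso.image_Ioo]; exact hkJ
  obtain ⟨hka, hkb⟩ := Ioo_endpoints ((φ k).strictMono hab) himg
  have hkb'J : φ k b' ∈ Set.Ioo a b := by
    rw [← hkJ]; exact ⟨b', ⟨h2, h3⟩, rfl⟩
  rcases hJ' k hkL with heq | hdis
  · rw [OrderIso.image_Ioo] at heq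
    exact hkb' (Ioo_endpoints ((φ k).strictMono ha'b') heq).2
  · rw [OrderIso.image_Ioo, Set.Ioo_inter_Ioo] at hdis
    have hne : max (φ k a') a' < min (φ k b') b' := by
      have e1 : φ k a' < φ k b' := (φ k).strictMono ha'b'
      have e2 : φ k a' < b' := by
        have : φ k a' < φ k a := (φ k).strictMono h1
        rw [hka] at this
        exact this.trans h2
      have e3 : a' < φ k b' := h1.trans hkb'J.1
      simp only [max_lt_iff, lt_min_iff]
      exact ⟨⟨e1, e3⟩, ⟨e2, ha'b'⟩⟩
    have := Set.nonempty_Ioo.2 hne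
    rw [hdis] at this
    exact Set.not_nonempty_empty this

lemma map_conj_self {H : Subgroup G} {h : G} (hh : h ∈ H) :
    Subgroup.map (MulAut.conj h).toMonoidHom H = H := by
  ext x
  constructor
  · rintro ⟨y, hy, rfl⟩
    show h * y * h⁻¹ ∈ H
    exact H.mul_mem (H.mul_mem hh hy) (H.inv_mem hh)
  · intro hx
    exact ⟨h⁻¹ * x * h, H.mul_mem (H.mul_mem (H.inv_mem hh) hx) hh, by
      show h * (h⁻¹ * x * h) * h⁻¹ = x
      group⟩

lemma relIndex_conj (A B : Subgroup G) (h : G) :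
    (Subgroup.map (MulAut.conj h).toMonoidHom A).relIndex
      (Subgroup.map (MulAut.conj h).toMonoidHom B) = A.relIndex B := by
  rw [Subgroup.map_equiv_eq_comap_symm' (MulAut.conj h) A, Subgroup.relIndex_comap,
    Subgroup.map_map]
  congr 1
  have hcomp : ((MulAut.conj h).symm.toMonoidHom).comp (MulAut.conj h).toMonoidHom =
      MonoidHom.id G := by
    ext x
    exact (MulAut.conj h).symm_apply_apply x
  rw [hcomp, Subgroup.map_id]

lemma promote {K H : Subgroup G} (hle : K ≤ H) (hrel : K.relIndex H ≠ 0)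
    {J : Set ℝ} (hJ : IsIrredWanderingInterval φ K J) :
    IsIrredWanderingInterval φ H J := by
  obtain ⟨a, b, hab, rfl⟩ := hJ.1.1
  have hwand := hJ.1.2
  refine ⟨⟨⟨a, b, hab, rfl⟩, ?_⟩, fun x hx => (hJ.2 x hx).imp (fun k hk => ⟨hle hk.1, hk.2⟩)⟩
  intro h hh
  by_contra hcon
  push_neg at hcon
  obtain ⟨hneq, hinter⟩ := hcon
  rw [OrderIso.image_Ioo] at hneq hinter
  set a' := φ h a with ha'
  set b' := φ h b with hb'
  have ha'b' : a' < b' := (φ h).strictMono hab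
  rw [Set.Ioo_inter_Ioo] at hinter
  have hover : max a' a < min b' b := Set.nonempty_Ioo.1 hinter
  have h1 : a' < b := lt_of_le_of_lt (le_max_left a' a) (hover.trans_le (min_le_right b' b))
  have h2 : a < b' := lt_of_le_of_lt (le_max_right a' a) (hover.trans_le (min_le_left b' b))
  have hpowh : ∃ m : ℕ, 0 < m ∧ h ^ m ∈ K := by
    obtain ⟨n, hn, _, hmem⟩ := Subgroup.exists_pow_mem_of_relIndex_ne_zero hrel hh
    exact ⟨n, hn, hmem.1⟩
  have hpowh' : ∃ m : ℕ, 0 < m ∧ h⁻¹ ^ m ∈ K := by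
    obtain ⟨n, hn, _, hmem⟩ := Subgroup.exists_pow_mem_of_relIndex_ne_zero hrel (H.inv_mem hh)
    exact ⟨n, hn, hmem.1⟩
  have hJne : (Set.Ioo a b).Nonempty := Set.nonempty_Ioo.2 hab
  -- case B helper : J ⊆ φ h '' J properly implies contradiction via h⁻¹
  have caseB : a' ≤ a → b ≤ b' → False := by
    intro c1 c2
    have hsub : Set.Ioo a b ⊆ φ h '' Set.Ioo a b := by
      rw [OrderIso.image_Ioo]
      exact Set.Ioo_subset_Ioo c1 c2
    have hsub' : φ h⁻¹ '' Set.Ioo a b ⊆ Set.Ioo a b := by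
      intro y hy
      obtain ⟨z, hz, rfl⟩ := hy
      obtain ⟨w, hw, hwz⟩ := hsub hz
      have : φ h⁻¹ (φ h w) = w := by
        rw [← phi_mul_apply, inv_mul_cancel, phi_one_apply]
      rw [← hwz, this]
      exact hw
    have hne' : φ h⁻¹ '' Set.Ioo a b ≠ Set.Ioo a b := by
      intro he
      have := phi_inv_image φ he
      rw [inv_inv, OrderIso.image_Ioo] at this
      exact hneq this
    exact shrink φ hwand hpowh' hsub' hne' hJne
  rcases le_or_gt a a' with c1 | c1
  · rcases le_or_gt b' b with c2 | c2
    · -- case A : φ h '' J ⊆ J properly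
      refine shrink φ hwand hpowh ?_ ?_ hJne
      · rw [OrderIso.image_Ioo]
        exact Set.Ioo_subset_Ioo c1 c2
      · rw [OrderIso.image_Ioo]
        exact hneq
    · rcases eq_or_lt_of_le c1 with c1e | c1s
      · exact caseB (le_of_eq c1e.symm) c2.le
      · -- case C : a < a' ∧ b < b' : crossing₁
        -- set up the common finite index subgroup L
        set Kh := Subgroup.map (MulAut.conj h).toMonoidHom K with hKh
        have hKhH : Kh ≤ H := by
          rw [hKh, ← map_conj_self (H := H) hh]
          exact Subgroup.map_mono hle
        have hKhrel : Kh.relIndex H ≠ 0 := by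
          have := relIndex_conj (G := G) K H h
          rw [map_conj_self (H := H) hh] at this
          rw [hKh, this]
          exact hrel
        set L := Kh ⊓ K with hL
        have hLK : L.relIndex K ≠ 0 := by
          rw [hL, Subgroup.inf_relIndex_right]
          intro h0
          exact hKhrel (Subgroup.relIndex_eq_zero_of_le_right hle h0)
        have hLKh : L.relIndex Kh ≠ 0 := by
          rw [hL, Subgroup.inf_relIndex_left]
          intro h0
          exact hrel (Subgroup.relIndex_eq_zero_of_le_right hKhH h0)
        have hJL : IsIrredWanderingInterval φ L (Set.Ioo a b) :=
          descent φ inf_le_right hLK hJ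
        have hJ'Kh : IsIrredWanderingInterval φ Kh (φ h '' Set.Ioo a b) := transport φ h hJ
        rw [OrderIso.image_Ioo] at hJ'Kh
        have hJ'L : IsIrredWanderingInterval φ L (Set.Ioo a' b') :=
          descent φ inf_le_left hLKh hJ'Kh
        exact crossing₁ φ c1s h1 c2 hJL hJ'L.1.2
  · rcases le_or_gt b b' with c2 | c2
    · exact caseB c1.le c2
    · -- case D : a' < a ∧ b' < b : crossing₂
      set Kh := Subgroup.map (MulAut.conj h).toMonoidHom K with hKh
      have hKhH : Kh ≤ H := by
        rw [hKh, ← map_conj_self (H := H) hh]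
        exact Subgroup.map_mono hle
      have hKhrel : Kh.relIndex H ≠ 0 := by
        have := relIndex_conj (G := G) K H h
        rw [map_conj_self (H := H) hh] at this
        rw [hKh, this]
        exact hrel
      set L := Kh ⊓ K with hL
      have hLK : L.relIndex K ≠ 0 := by
        rw [hL, Subgroup.inf_relIndex_right]
        intro h0
        exact hKhrel (Subgroup.relIndex_eq_zero_of_le_right hle h0)
      have hLKh : L.relIndex Kh ≠ 0 := by
        rw [hL, Subgroup.inf_relIndex_left]
        intro h0
        exact hrel (Subgroup.relIndex_eq_zero_of_le_right hKhH h0)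
      have hJL : IsIrredWanderingInterval φ L (Set.Ioo a b) :=
        descent φ inf_le_right hLK hJ
      have hJ'Kh : IsIrredWanderingInterval φ Kh (φ h '' Set.Ioo a b) := transport φ h hJ
      rw [OrderIso.image_Ioo] at hJ'Kh
      have hJ'L : IsIrredWanderingInterval φ L (Set.Ioo a' b') :=
        descent φ inf_le_left hLKh hJ'Kh
      exact crossing₂ φ c1 h2 c2 hJL hJ'L.1.2

end Aux

theorem stmt7 (G : Type*) [Group G] [Countable G]
    (φ : G →* (ℝ ≃o ℝ)) (hirr : ∀ x : ℝ, ∃ g : G, φ g x ≠ x)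
    (H : Subgroup G) (hH : Commensurated H)
    (hnomin : ¬ HasMinimalSetOn φ H) :
    ∀ g : G, ∀ I : Set ℝ, IsIrredWanderingInterval φ H I →
      IsIrredWanderingInterval φ H ((φ g) '' I) := by
  intro g I hI
  set H' := Subgroup.map (MulAut.conj g).toMonoidHom H with hH'
  obtain ⟨hcomm1, hcomm2⟩ := hH g
  have step1 : IsIrredWanderingInterval φ H' (φ g '' I) := transport φ g hI
  have hrel1 : (H ⊓ H').relIndex H' ≠ 0 := by
    rw [Subgroup.inf_relIndex_right]; exact hcomm1
  have step2 : IsIrredWanderingInterval φ (H ⊓ H') (φ g '' I) :=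
    descent φ inf_le_right hrel1 step1
  have hrel2 : (H ⊓ H').relIndex H ≠ 0 := by
    rw [Subgroup.inf_relIndex_left]; exact hcomm2
  exact promote φ inf_le_left hrel2 step2
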